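/- Let K be a field of characteristic 2, n ≥ 3, and G = ⟨a, b | a^{2^n} = b² = 1, b a b⁻¹ = a^{-1+2^{n-1}}⟩ the semidihedral group of order 2^{n+1}. Set u = a + b, v = 1 + b in KG. Then u² - uvu = (1+a)^{2^{n-1}}(1+b) + (1+a)^{2^{n-1}} ≠ 0, while u² ≡ uvu (mod I_K(G)^{2^{n-1}}) and u², uvu ∉ I_K(G)⁴. -/

import Mathlib

/-- The Jacobson radical of a ring, as an ideal. -/
def ringRad (A : Type*) [Ring A] : Ideal A := (⊥ : Ideal A).jacobson

/-- `B` is a filtered multiplicative `K`-basis of the `K`-algebra `A`: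
it is a `K`-basis, products of basis elements are `0` or again basis elements,
and `B ∩ rad A` is a `K`-basis of the Jacobson radical `rad A`. -/
def IsFilteredMulBasis (K : Type*) {A : Type*} [Field K] [Ring A] [Algebra K A]
    (B : Set A) : Prop :=
  LinearIndependent K ((↑) : B → A) ∧ Submodule.span K B = ⊤ ∧
  (∀ b₁ ∈ B, ∀ b₂ ∈ B, b₁ * b₂ = 0 ∨ b₁ * b₂ ∈ B) ∧
  LinearIndependent K ((↑) : ↥(B ∩ (ringRad A : Set A)) → A) ∧
  Submodule.span K (B ∩ (ringRad A : Set A)) = Submodule.restrictScalars K (ringRad A)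

/-- The augmentation ideal of a group algebra. -/
noncomputable def augIdeal (K G : Type*) [Field K] [Group G] : Ideal (MonoidAlgebra K G) :=
  RingHom.ker (MonoidAlgebra.lift K K G 1).toRingHom

def sdC0 : DihedralGroup 4 → ZMod 2 := fun h =>
  if h = DihedralGroup.r 0 ∨ h = DihedralGroup.r 1 then 1 else 0

set_option maxRecDepth 10000 in
lemma sdC0_sum (h₁ h₂ h₃ h₄ : DihedralGroup 4) :
    sdC0 1 + sdC0 h₁ + sdC0 h₂ + sdC0 h₃ + sdC0 h₄ + sdC0 (h₁*h₂) + sdC0 (h₁*h₃) +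
    sdC0 (h₁*h₄) + sdC0 (h₂*h₃) + sdC0 (h₂*h₄) + sdC0 (h₃*h₄) + sdC0 (h₁*h₂*h₃) +
    sdC0 (h₁*h₂*h₄) + sdC0 (h₁*h₃*h₄) + sdC0 (h₂*h₃*h₄) + sdC0 (h₁*h₂*h₃*h₄) = 0 := by
  revert h₁ h₂ h₃ h₄; decide

def sdProdSet {R : Type*} [Ring R] (T : Set R) : ℕ → Set R
  | 0 => {1}
  | k+1 => {x | ∃ y ∈ sdProdSet T k, ∃ t ∈ T, x = y * t}

noncomputable def sdE {G : Type*} [Group G] (n : ℕ) (a b : G)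
    (p : ZMod (2^n) × ZMod 2) : G := a ^ p.1.val * b ^ p.2.val

noncomputable def sdDih (n : ℕ) (h4 : (4:ℕ) ∣ 2^n) (p : ZMod (2^n) × ZMod 2) :
    DihedralGroup 4 :=
  if p.2 = 0 then DihedralGroup.r (ZMod.castHom h4 (ZMod 4) p.1)
  else DihedralGroup.sr (-(ZMod.castHom h4 (ZMod 4) p.1))

lemma sd_form {G : Type*} [Group G] {n : ℕ} {a b : G}
    (ha : a ^ 2 ^ n = 1) (hbb : b * b = 1)
    (hba : ∀ k : ℕ, b * a ^ k = a ^ ((2^(n-1)-1) * k) * b)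
    (hgen : Subgroup.closure {a, b} = (⊤ : Subgroup G)) (g : G) :
    ∃ i : ℕ, g = a ^ i ∨ g = a ^ i * b := by
  have hbinv : b⁻¹ = b := inv_eq_of_mul_eq_one_right hbb
  have hpowinv : ∀ i : ℕ, (a ^ i)⁻¹ = a ^ (i * (2^n - 1)) := by
    intro i
    rw [inv_eq_iff_mul_eq_one, ← pow_add]
    have h1 : i ≤ i * 2^n := Nat.le_mul_of_pos_right i (Nat.two_pow_pos n)
    have h2 : i + i * (2^n - 1) = i * 2^n := by
      rw [Nat.mul_sub, mul_one]; omega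
    rw [h2, pow_mul', ha, one_pow]
  have hmem : g ∈ Subgroup.closure {a, b} := hgen ▸ Subgroup.mem_top g
  induction hmem using Subgroup.closure_induction with
  | mem x hx =>
    rcases hx with rfl | rfl
    · exact ⟨1, Or.inl (pow_one _).symm⟩
    · exact ⟨0, Or.inr (by rw [pow_zero, one_mul])⟩
  | one => exact ⟨0, Or.inl (pow_zero _).symm⟩
  | mul x y hx hy ihx ihy =>
    obtain ⟨i, rfl | rfl⟩ := ihx <;> obtain ⟨k, rfl | rfl⟩ := ihy
    · exact ⟨i + k, Or.inl (pow_add a i k).symm⟩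
    · exact ⟨i + k, Or.inr (by rw [← mul_assoc, ← pow_add])⟩
    · exact ⟨i + (2^(n-1)-1) * k, Or.inr (by
        rw [mul_assoc, hba k, ← mul_assoc, ← pow_add])⟩
    · refine ⟨i + (2^(n-1)-1) * k, Or.inl ?_⟩
      have h3 : b * (a ^ k * b) = a ^ ((2^(n-1)-1) * k) := by
        rw [← mul_assoc, hba k, mul_assoc, hbb, mul_one]
      rw [mul_assoc, h3, ← pow_add]
  | inv x hx ihx =>
    obtain ⟨i, rfl | rfl⟩ := ihx
    · exact ⟨i * (2^n - 1), Or.inl (hpowinv i)⟩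
    · refine ⟨(2^(n-1)-1) * (i * (2^n - 1)), Or.inr ?_⟩
      rw [mul_inv_rev, hbinv, hpowinv i, hba]

set_option maxHeartbeats 2000000 in
theorem stmt_17 {K : Type*} [Field K] [CharP K 2]
    {G : Type*} [Group G] (n : ℕ) (hn : 3 ≤ n) (a b : G)
    (ha : a ^ 2 ^ n = 1) (hb : b ^ 2 = 1)
    (hconj : b * a * b⁻¹ = a ^ 2 ^ (n - 1) * a⁻¹)
    (hgen : Subgroup.closure {a, b} = (⊤ : Subgroup G))
    (hcard : Nat.card G = 2 ^ (n + 1)) :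
    ∀ A B u v : MonoidAlgebra K G,
      A = MonoidAlgebra.of K G a → B = MonoidAlgebra.of K G b →
      u = A + B → v = 1 + B →
      u ^ 2 - u * v * u = (1 + A) ^ 2 ^ (n - 1) * (1 + B) + (1 + A) ^ 2 ^ (n - 1) ∧
      u ^ 2 - u * v * u ≠ 0 ∧
      u ^ 2 - u * v * u ∈ augIdeal K G ^ 2 ^ (n - 1) ∧
      u ^ 2 ∉ augIdeal K G ^ 4 ∧ u * v * u ∉ augIdeal K G ^ 4 := by
  intro A B u v hA hB hu hv
  subst hA hB hu hv
  have hN1 : (1:ℕ) ≤ 2^(n-1) := Nat.one_le_two_pow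
  have hbb : b * b = 1 := by rw [← pow_two]; exact hb
  have hbinv : b⁻¹ = b := inv_eq_of_mul_eq_one_right hbb
  have hm1 : 2^(n-1) - 1 + 1 = 2^(n-1) := by omega
  have hba1 : b * a * b⁻¹ = a ^ (2^(n-1) - 1) := by
    have h' : a ^ (2^(n-1)) = a ^ (2^(n-1)-1) * a := by rw [← pow_succ, hm1]
    rw [hconj, h', mul_inv_cancel_right]
  have hbapow : ∀ k : ℕ, b * a ^ k = a ^ ((2^(n-1)-1) * k) * b := by
    intro k
    have h1 : b * a ^ k * b⁻¹ = a ^ ((2^(n-1)-1)*k) := by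
      rw [← conj_pow, hba1, ← pow_mul]
    rw [← h1, inv_mul_cancel_right]
  -- normal form
  haveI : NeZero (2^n) := ⟨(Nat.two_pow_pos n).ne'⟩
  haveI : Fact (1 < 2^n) := ⟨by have : 2^1 < 2^n := Nat.pow_lt_pow_right one_lt_two (by omega); omega⟩
  have hApow : ∀ t : ℕ, a ^ ((t : ZMod (2^n))).val = a ^ t := fun t => by
    rw [ZMod.val_natCast]; exact (pow_eq_pow_mod t ha).symm
  have hsurj : Function.Surjective (sdE n a b) := by
    intro g
    obtain ⟨i, hg | hg⟩ := sd_form ha hbb hbapow hgen g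
    · exact ⟨((i : ZMod (2^n)), 0), by
        simp only [sdE, ZMod.val_zero, pow_zero, mul_one, hApow, hg]⟩
    · exact ⟨((i : ZMod (2^n)), 1), by
        simp only [sdE, ZMod.val_one, pow_one, hApow, hg]⟩
  have hGfin : Finite G := Nat.finite_of_card_ne_zero (by rw [hcard]; exact (Nat.two_pow_pos _).ne')
  haveI := Fintype.ofFinite G
  have hbij : Function.Bijective (sdE n a b) := by
    rw [Fintype.bijective_iff_surjective_and_card]
    refine ⟨hsurj, ?_⟩
    rw [Fintype.card_prod, ZMod.card, ZMod.card, ← Nat.card_eq_fintype_card (α := G), hcard, pow_succ]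
  have hane : a ^ 2^(n-1) ≠ 1 := by
    intro h
    have h2 : sdE n a b ((2^(n-1) : ℕ), 0) = sdE n a b ((0:ℕ), 0) := by
      simp only [sdE, ZMod.val_zero, pow_zero, mul_one, hApow, h, Nat.cast_zero]
    have h3 : ((2^(n-1) : ℕ) : ZMod (2^n)) = ((0:ℕ) : ZMod (2^n)) :=
      congrArg Prod.fst (hbij.injective h2)
    rw [Nat.cast_zero, ZMod.natCast_eq_zero_iff] at h3
    have h4 := Nat.le_of_dvd (Nat.two_pow_pos _) h3
    have h5 : 2^(n-1) < 2^n := Nat.pow_lt_pow_right one_lt_two (by omega)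
    omega

  have h4 : (4:ℕ) ∣ 2^n := ⟨2^(n-2), by rw [show (4:ℕ) = 2^2 by norm_num, ← pow_add]; congr 1; omega⟩
  -- helpers for ZMod exponents
  have hvadd : ∀ (x y : ZMod (2^n)), a ^ (x + y).val = a ^ x.val * a ^ y.val := by
    intro x y
    rw [ZMod.val_add, ← pow_add]
    exact (pow_eq_pow_mod _ ha).symm
  have hvcast : ∀ (y : ZMod (2^n)), ((y.val : ℕ) : ZMod (2^n)) = y := fun y => by
    rw [ZMod.natCast_val, ZMod.cast_id]
  have hvmul : ∀ (y : ZMod (2^n)),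
      a ^ ((((2^(n-1)-1 : ℕ) : ZMod (2^n)) * y).val) = a ^ ((2^(n-1)-1) * y.val) := by
    intro y
    have h' : ((2^(n-1)-1 : ℕ) : ZMod (2^n)) * y = (((2^(n-1)-1) * y.val : ℕ) : ZMod (2^n)) := by
      rw [Nat.cast_mul, hvcast]
    rw [h', hApow]
  have hzmod2 : ∀ j : ZMod 2, j = 0 ∨ j = 1 := by decide
  have hemul : ∀ p q : ZMod (2^n) × ZMod 2, sdE n a b p * sdE n a b q
      = sdE n a b (p.1 + ((2^(n-1)-1:ℕ) : ZMod (2^n))^(p.2.val) * q.1, p.2 + q.2) := by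
    rintro ⟨i, j⟩ ⟨k, l⟩
    rcases hzmod2 j with rfl | rfl
    · simp only [sdE, ZMod.val_zero, pow_zero, mul_one, one_mul, zero_add]
      rw [hvadd, mul_assoc]
    · simp only [sdE, ZMod.val_one, pow_one]
      rw [hvadd, hvmul]
      rcases hzmod2 l with rfl | rfl
      · simp only [ZMod.val_zero, pow_zero, mul_one, add_zero, ZMod.val_one, pow_one]
        rw [mul_assoc (a ^ i.val) b, hbapow, ← mul_assoc]
      · rw [show ((1:ZMod 2) + 1) = 0 by decide]
        simp only [ZMod.val_zero, ZMod.val_one, pow_zero, pow_one, mul_one]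
        have h3 : b * (a ^ k.val * b) = a ^ ((2^(n-1)-1) * k.val) := by
          rw [← mul_assoc, hbapow, mul_assoc, hbb, mul_one]
        rw [mul_assoc, h3]
  have hρm : (ZMod.castHom h4 (ZMod 4)) (((2^(n-1)-1:ℕ) : ZMod (2^n))) = -1 := by
    rw [map_natCast]
    have h8 : 2^(n-1) = 2^(n-3) * 4 := by
      rw [show (4:ℕ) = 2^2 by norm_num, ← pow_add]; congr 1; omega
    have h9 : (2^(n-1)-1) % 4 = 3 := by
      rw [h8]; have : 1 ≤ 2^(n-3) := Nat.one_le_two_pow; omega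
    conv_lhs => rw [← Nat.mod_add_div (2^(n-1)-1) 4, h9]
    push_cast
    rw [show (4 : ZMod 4) = 0 by decide, zero_mul, add_zero]
    decide
  have hdih : ∀ p q : ZMod (2^n) × ZMod 2,
      sdDih n h4 (p.1 + ((2^(n-1)-1:ℕ) : ZMod (2^n))^(p.2.val) * q.1, p.2 + q.2)
        = sdDih n h4 p * sdDih n h4 q := by
    rintro ⟨i, j⟩ ⟨k, l⟩
    rcases hzmod2 j with rfl | rfl <;> rcases hzmod2 l with rfl | rfl <;>
      simp only [sdDih, zero_add, add_zero, ZMod.val_zero, ZMod.val_one, pow_zero, pow_one,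
        one_mul, map_add, map_mul, hρm, show ((1:ZMod 2) + 1) = 0 by decide,
        if_pos rfl, if_neg (show (1:ZMod 2) ≠ 0 by decide),
        DihedralGroup.r_mul_r, DihedralGroup.r_mul_sr, DihedralGroup.sr_mul_r,
        DihedralGroup.sr_mul_sr, if_true] <;> congr 1 <;> ring
  obtain ⟨π, hπe⟩ : ∃ π : G → DihedralGroup 4, ∀ p, π (sdE n a b p) = sdDih n h4 p :=
    ⟨fun g => sdDih n h4 ((Equiv.ofBijective _ hbij).symm g),
     fun p => congrArg _ ((Equiv.ofBijective _ hbij).symm_apply_apply p)⟩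
  have hπmul : ∀ g h : G, π (g * h) = π g * π h := by
    intro g h
    obtain ⟨p, rfl⟩ := hsurj g
    obtain ⟨q, rfl⟩ := hsurj h
    rw [hemul p q, hπe, hπe, hπe, hdih]
  have hπone : π 1 = 1 := by
    have h1 : (1:G) = sdE n a b (0, 0) := by simp [sdE]
    rw [h1, hπe]
    simp only [sdDih, if_pos rfl, map_zero]
    exact DihedralGroup.one_def.symm
  have hπapow : ∀ k : ℕ, π (a ^ k) = DihedralGroup.r ((k : ZMod 4)) := by
    intro k
    have h1 : a ^ k = sdE n a b ((k : ZMod (2^n)), 0) := by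
      simp only [sdE, ZMod.val_zero, pow_zero, mul_one, hApow]
    rw [h1, hπe]
    simp only [sdDih, if_pos rfl, map_natCast, if_true]
  have hπa : π a = DihedralGroup.r 1 := by
    have := hπapow 1; rwa [pow_one, Nat.cast_one] at this
  have hπb : π b = DihedralGroup.sr 0 := by
    have h1 : b = sdE n a b (0, 1) := by
      simp only [sdE, ZMod.val_zero, ZMod.val_one, pow_zero, pow_one, one_mul]
    rw [h1, hπe]
    simp only [sdDih, if_neg (show (1:ZMod 2) ≠ 0 by decide), map_zero, neg_zero]

  -- the functional
  obtain ⟨φ, hφsingle, hφadd, hφsmul, hφzero⟩ :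
      ∃ φ : MonoidAlgebra K G → K,
        (∀ (g : G) (c : K), φ (MonoidAlgebra.single g c) = c * (ZMod.castHom (dvd_refl 2) K) (sdC0 (π g))) ∧
        (∀ x y, φ (x + y) = φ x + φ y) ∧
        (∀ (c : K) x, φ (c • x) = c * φ x) ∧ φ 0 = 0 := by
    refine ⟨fun x => Finsupp.linearCombination K (fun g : G => (ZMod.castHom (dvd_refl 2) K) (sdC0 (π g))) x.coeff,
      fun g c => ?_, fun x y => map_add (Finsupp.linearCombination K _) x.coeff y.coeff, fun c x => ?_, map_zero (Finsupp.linearCombination K _)⟩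
    · dsimp only; rw [MonoidAlgebra.coeff_single, Finsupp.linearCombination_single, smul_eq_mul]
    · dsimp only; rw [MonoidAlgebra.coeff_smul, map_smul, smul_eq_mul]
  have hφof : ∀ g : G, φ (MonoidAlgebra.of K G g) =
      (ZMod.castHom (dvd_refl 2) K) (sdC0 (π g)) := fun g => by
    rw [MonoidAlgebra.of_apply, hφsingle, one_mul]
  have hφone : φ 1 = (ZMod.castHom (dvd_refl 2) K) (sdC0 1) := by
    rw [show (1 : MonoidAlgebra K G) = MonoidAlgebra.of K G 1 from (map_one _).symm, hφof, hπone]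
  have hφ4 : ∀ g₁ g₂ g₃ g₄ : G,
      φ ((1 + MonoidAlgebra.of K G g₁) * (1 + MonoidAlgebra.of K G g₂) *
        (1 + MonoidAlgebra.of K G g₃) * (1 + MonoidAlgebra.of K G g₄)) = 0 := by
    intro g₁ g₂ g₃ g₄
    have hexp : (1 + MonoidAlgebra.of K G g₁) * (1 + MonoidAlgebra.of K G g₂) *
        (1 + MonoidAlgebra.of K G g₃) * (1 + MonoidAlgebra.of K G g₄) =
        MonoidAlgebra.of K G 1 + MonoidAlgebra.of K G g₁ + MonoidAlgebra.of K G g₂ +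
        MonoidAlgebra.of K G g₃ + MonoidAlgebra.of K G g₄ + MonoidAlgebra.of K G (g₁*g₂) +
        MonoidAlgebra.of K G (g₁*g₃) + MonoidAlgebra.of K G (g₁*g₄) +
        MonoidAlgebra.of K G (g₂*g₃) + MonoidAlgebra.of K G (g₂*g₄) +
        MonoidAlgebra.of K G (g₃*g₄) + MonoidAlgebra.of K G (g₁*g₂*g₃) +
        MonoidAlgebra.of K G (g₁*g₂*g₄) + MonoidAlgebra.of K G (g₁*g₃*g₄) +
        MonoidAlgebra.of K G (g₂*g₃*g₄) + MonoidAlgebra.of K G (g₁*g₂*g₃*g₄) := by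
      simp only [map_mul, map_one]
      noncomm_ring
    rw [hexp]
    simp only [hφadd, hφof]
    simp only [← map_add]
    simp only [hπmul, hπone]
    rw [sdC0_sum (π g₁) (π g₂) (π g₃) (π g₄), map_zero]
  -- the span chain
  have hIV1 : ∀ z, z ∈ augIdeal K G → z ∈ Submodule.span K
      (sdProdSet {x : MonoidAlgebra K G | ∃ g : G, x = 1 + MonoidAlgebra.of K G g} 1) := by
    intro z hz
    have hzsum : (∑ g ∈ z.coeff.support, z.coeff g) = 0 := by
      have h1 : (MonoidAlgebra.lift K K G 1).toRingHom z = 0 := hz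
      rw [AlgHom.toRingHom_eq_coe, RingHom.coe_coe, MonoidAlgebra.lift_apply] at h1
      simpa [MonoidHom.one_apply, Finsupp.sum] using h1
    have hrepr : z = ∑ g ∈ z.coeff.support, (z.coeff g) • (1 + MonoidAlgebra.of K G g) := by
      have h1 : ∑ g ∈ z.coeff.support, (z.coeff g) • (1 + MonoidAlgebra.of K G g)
          = (∑ g ∈ z.coeff.support, z.coeff g) • (1:MonoidAlgebra K G)
            + ∑ g ∈ z.coeff.support, (z.coeff g) • MonoidAlgebra.of K G g := by
        rw [Finset.sum_smul, ← Finset.sum_add_distrib]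
        exact Finset.sum_congr rfl fun g _ => by rw [smul_add]
      rw [h1, hzsum, zero_smul, zero_add]
      conv_lhs => rw [← MonoidAlgebra.sum_coeff_single z]
      rw [Finsupp.sum]
      exact Finset.sum_congr rfl fun g _ => by
        rw [MonoidAlgebra.of_apply, MonoidAlgebra.smul_single', mul_one]
    rw [hrepr]
    refine Submodule.sum_mem _ fun g _ => Submodule.smul_mem _ _ (Submodule.subset_span ?_)
    exact ⟨1, rfl, 1 + MonoidAlgebra.of K G g, ⟨g, rfl⟩, (one_mul _).symm⟩

  have hVmulI : ∀ k : ℕ, ∀ x ∈ Submodule.span K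
        (sdProdSet {x : MonoidAlgebra K G | ∃ g : G, x = 1 + MonoidAlgebra.of K G g} k),
      ∀ y ∈ augIdeal K G, x * y ∈ Submodule.span K
        (sdProdSet {x : MonoidAlgebra K G | ∃ g : G, x = 1 + MonoidAlgebra.of K G g} (k+1)) := by
    intro k x hx y hy
    have h1 : x * y ∈ Submodule.span K
        (sdProdSet {x : MonoidAlgebra K G | ∃ g : G, x = 1 + MonoidAlgebra.of K G g} k) *
        Submodule.span K
        (sdProdSet {x : MonoidAlgebra K G | ∃ g : G, x = 1 + MonoidAlgebra.of K G g} 1) :=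
      Submodule.mul_mem_mul hx (hIV1 y hy)
    refine (le_trans (le_of_eq (Submodule.span_mul_span K _ _)) (Submodule.span_mono ?_)) h1
    rintro z ⟨s, hs, t, ⟨w, hw, t', ⟨g, rfl⟩, rfl⟩, rfl⟩
    rcases hw with rfl
    exact ⟨s, hs, 1 + MonoidAlgebra.of K G g, ⟨g, rfl⟩, by rw [one_mul]⟩
  have hpowV : ∀ k : ℕ, ∀ z ∈ augIdeal K G ^ (k+1), z ∈ Submodule.span K
      (sdProdSet {x : MonoidAlgebra K G | ∃ g : G, x = 1 + MonoidAlgebra.of K G g} (k+1)) := by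
    intro k
    induction k with
    | zero =>
      intro z hz
      rw [zero_add] at hz ⊢
      rw [Submodule.pow_one] at hz
      exact hIV1 z hz
    | succ k ih =>
      intro z hz
      rw [Submodule.pow_succ] at hz
      exact Submodule.mul_induction_on hz (fun m hm y hy => hVmulI _ m (ih m hm) y hy)
        (fun x y hx hy => Submodule.add_mem _ hx hy)
  have hφV4 : ∀ z ∈ augIdeal K G ^ 4, φ z = 0 := by
    intro z hz
    have hz4 := hpowV 3 z (by exact hz)
    clear hz
    induction hz4 using Submodule.span_induction with
    | mem x h =>
      obtain ⟨y3, hy3, t4, ⟨g₄, rfl⟩, rfl⟩ := h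
      obtain ⟨y2, hy2, t3, ⟨g₃, rfl⟩, rfl⟩ := hy3
      obtain ⟨y1, hy1, t2, ⟨g₂, rfl⟩, rfl⟩ := hy2
      obtain ⟨y0, hy0, t1, ⟨g₁, rfl⟩, rfl⟩ := hy1
      rcases hy0 with rfl
      rw [one_mul]
      exact hφ4 g₁ g₂ g₃ g₄
    | zero => exact hφzero
    | add x y hx hy ihx ihy => rw [hφadd, ihx, ihy, add_zero]
    | smul c x hx ihx => rw [hφsmul, ihx, mul_zero]

  -- final computations
  haveI : CharP (MonoidAlgebra K G) 2 :=
    charP_of_injective_algebraMap (algebraMap K (MonoidAlgebra K G)).injective 2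
  set X := MonoidAlgebra.of K G a with hXdef
  set Y := MonoidAlgebra.of K G b with hYdef
  have hY2 : Y * Y = 1 := by rw [hYdef, ← map_mul, hbb, map_one]
  have haba : a * b * a = a ^ (2^(n-1)) * b := by
    have h := hbapow 1
    rw [pow_one, mul_one] at h
    rw [mul_assoc, h, ← mul_assoc, ← pow_succ', hm1]
  have harith : (2^(n-1)-1) * 2^(n-1) = 2^(n-1) + 2^n * (2^(n-2) - 1) := by
    obtain ⟨t, ht⟩ : ∃ t, n = t + 3 := ⟨n - 3, by omega⟩
    subst ht
    obtain ⟨y, hy⟩ : ∃ y, 2^t = y + 1 := ⟨2^t - 1, by have := Nat.one_le_two_pow (n := t); omega⟩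
    simp only [show t+3-1 = t+2 by omega, show t+3-2 = t+1 by omega, pow_add, pow_succ, hy]
    ring_nf
    have e1 : (y+1) * 2 * 2 - 1 = 4*y + 3 := by omega
    have e2 : (y+1) * 2 - 1 = 2*y + 1 := by omega
    ring_nf at e1 e2
    rw [e1]
    ring_nf
    nlinarith [sq_nonneg y]
  have hcent : b * a ^ (2^(n-1)) = a ^ (2^(n-1)) * b := by
    rw [hbapow, harith, pow_add, pow_mul, ha, one_pow, mul_one]
  have hXYX : X * Y * X = X ^ 2 ^ (n-1) * Y := by
    rw [hXdef, hYdef, ← map_mul, ← map_mul, haba, map_mul, map_pow]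
  have hfrob : (1 + X) ^ 2 ^ (n-1) = 1 + X ^ 2 ^ (n-1) := by
    have h := add_pow_char_pow_of_commute 2 (n-1) (Commute.one_left X)
    rwa [one_pow] at h
  have hchar2 : ∀ x : MonoidAlgebra K G, x + x = 0 := fun x => CharTwo.add_self_eq_zero x
  have hw : (X + Y)^2 - (X + Y) * (1 + Y) * (X + Y) = X ^ 2 ^ (n-1) * Y + Y := by
    have h2 : (X+Y) * (1+Y) * (X+Y) = (X+Y) * (X+Y) + ((X+Y) * Y) * (X+Y) := by
      rw [mul_add (X+Y) 1 Y, mul_one, add_mul]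
    rw [sq, h2, sub_add_cancel_left, CharTwo.neg_eq]
    have h3 : (X+Y) * Y = X*Y + 1 := by rw [add_mul, hY2]
    rw [h3, add_mul, one_mul, mul_add, hXYX, mul_assoc X Y Y, hY2, mul_one]
    have h5 : X ^ 2^(n-1) * Y + X + (X + Y) = X ^ 2^(n-1)*Y + Y + (X + X) := by abel
    rw [h5, hchar2 X, add_zero]
  have hadist : a ^ 2^(n-1) * b ≠ b := fun h =>
    hane (mul_right_cancel (h.trans (one_mul b).symm))
  have hu2 : (X + Y)^2 = X*X + X*Y + (Y*X + 1) := by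
    rw [sq, add_mul, mul_add, mul_add, hY2]
  have h8 : ((2 ^ (n-1) : ℕ) : ZMod 4) = 0 := by
    rw [ZMod.natCast_eq_zero_iff]
    exact ⟨2^(n-3), by rw [show (4:ℕ) = 2^2 by norm_num, ← pow_add]; congr 1; omega⟩
  have hφu2 : φ ((X+Y)^2) = 1 := by
    rw [hu2, hφadd, hφadd, hφadd]
    rw [hXdef, hYdef, ← map_mul, ← map_mul, ← map_mul, hφof, hφof, hφof, hφone]
    rw [hπmul, hπmul, hπmul, hπa, hπb]
    rw [← map_add, ← map_add, ← map_add]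
    rw [show sdC0 (DihedralGroup.r 1 * DihedralGroup.r 1) + sdC0 (DihedralGroup.r 1 * DihedralGroup.sr 0)
        + (sdC0 (DihedralGroup.sr 0 * DihedralGroup.r 1) + sdC0 1) = (1 : ZMod 2) by decide, map_one]
  refine ⟨?_, ?_, ?_, ?_, ?_⟩
  · rw [hw, hfrob]
    have h6 : (1 + X ^ 2^(n-1)) * (1+Y) + (1 + X ^ 2^(n-1))
        = X ^ 2^(n-1) * Y + Y + ((1 + X ^ 2^(n-1)) + (1 + X ^ 2^(n-1))) := by
      rw [mul_add, mul_one, add_mul, one_mul]; abel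
    rw [h6, hchar2 (1 + X ^ 2^(n-1)), add_zero]
  · rw [hw]
    have hsingle : X ^ 2^(n-1) * Y + Y
        = MonoidAlgebra.single (a ^ 2^(n-1) * b) (1:K) + MonoidAlgebra.single b (1:K) := by
      rw [hXdef, hYdef, ← map_pow, ← map_mul, MonoidAlgebra.of_apply, MonoidAlgebra.of_apply]
    rw [hsingle]
    intro h0
    have h1 := DFunLike.congr_fun
      (show (Finsupp.single (a ^ 2^(n-1) * b) (1:K) + Finsupp.single b (1:K) : G →₀ K) = 0 from congrArg MonoidAlgebra.coeff h0) b
    rw [Finsupp.add_apply, Finsupp.single_eq_of_ne' hadist, Finsupp.single_eq_same,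
      zero_add, Finsupp.zero_apply] at h1
    exact one_ne_zero h1
  · rw [hw]
    have hYPc : Y * X ^ 2^(n-1) = X ^ 2^(n-1) * Y := by
      rw [hXdef, hYdef, ← map_pow, ← map_mul, ← map_mul, hcent]
    have hrw : X ^ 2^(n-1) * Y + Y = Y * (1 + X) ^ 2^(n-1) := by
      rw [hfrob, mul_add, mul_one, hYPc, add_comm]
    rw [hrw]
    have hXaug : (1 + X) ∈ augIdeal K G := by
      show (MonoidAlgebra.lift K K G 1).toRingHom (1 + X) = 0
      rw [AlgHom.toRingHom_eq_coe, RingHom.coe_coe, map_add, map_one, hXdef,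
        MonoidAlgebra.lift_of, MonoidHom.one_apply]
      exact CharTwo.add_self_eq_zero 1
    exact Ideal.mul_mem_left _ Y (Submodule.pow_mem_pow _ hXaug _)
  · intro hmem
    exact one_ne_zero (hφu2.symm.trans (hφV4 _ hmem))
  · intro hmem
    have huvu : (X+Y) * (1+Y) * (X+Y) = (X+Y)^2 + (X ^ 2^(n-1) * Y + Y) :=
      calc (X+Y) * (1+Y) * (X+Y)
          = (X+Y)^2 - ((X+Y)^2 - (X+Y) * (1+Y) * (X+Y)) := (sub_sub_cancel _ _).symm
        _ = (X+Y)^2 - (X ^ 2^(n-1) * Y + Y) := by rw [hw]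
        _ = (X+Y)^2 + (X ^ 2^(n-1) * Y + Y) := CharTwo.sub_eq_add _ _
    have hφuvu : φ ((X+Y) * (1+Y) * (X+Y)) = 1 := by
      rw [huvu, hφadd, hφu2]
      have h7 : X ^ 2^(n-1) * Y + Y
          = MonoidAlgebra.of K G (a ^ 2^(n-1) * b) + MonoidAlgebra.of K G b := by
        rw [hXdef, hYdef, ← map_pow, ← map_mul]
      rw [h7, hφadd, hφof, hφof, hπmul, hπapow, hπb, h8]
      rw [← map_add]
      rw [show sdC0 (DihedralGroup.r 0 * DihedralGroup.sr 0) + sdC0 (DihedralGroup.sr 0)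
          = (0 : ZMod 2) by decide, map_zero, add_zero]
    exact one_ne_zero (hφuvu.symm.trans (hφV4 _ hmem))
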